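/- Let γ ∈ (0, 1), b₁, b₂ > 0, β₁, β₂ ∈ (0, 1], i ∈ {1, 2}, and data sizes n₁, n₂ > 1. Define firm i's readiness to collaborate f_i(n₁, n₂) = 2 b_i (n_i^{−β_i} − (n₁+n₂)^{−β_i}) − γ b_{−i} (n_{−i}^{−β_{−i}} − (n₁+n₂)^{−β_{−i}}). Then: (1) f_i is strictly decreasing in γ; (2) if β_j ln n_j > 1 for j = 1, 2, then f_i is strictly decreasing in β_i and strictly increasing in β_{−i}; (3) f_i is strictly increasing in b_i and strictly decreasing in b_{−i}. -/

import Mathlib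

lemma key_ineq {a s β : ℝ} (ha : 1 < a) (has : a < s) (hβ : 1 ≤ β * Real.log a) :
    Real.log s * Real.exp (-(Real.log s) * β) < Real.log a * Real.exp (-(Real.log a) * β) := by
  set t := Real.log a with ht'
  set u := Real.log s with hu'
  have ht : 0 < t := Real.log_pos ha
  have htu : t < u := Real.log_lt_log (by linarith) has
  have hβ0 : 0 < β := by nlinarith
  have h1 : Real.log (u / t) < u / t - 1 :=
    Real.log_lt_sub_one_of_pos (div_pos (by linarith) ht) (by
      intro h
      rw [div_eq_one_iff_eq (ne_of_gt ht)] at h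
      linarith)
  have h2 : u / t - 1 ≤ β * (u - t) := by
    rw [div_sub_one (ne_of_gt ht), div_le_iff₀ ht]
    nlinarith
  have h3 : u / t < Real.exp (β * (u - t)) := by
    calc u / t = Real.exp (Real.log (u / t)) := (Real.exp_log (div_pos (by linarith) ht)).symm
    _ < Real.exp (β * (u - t)) := Real.exp_lt_exp.mpr (by linarith)
  have h4 : u < t * Real.exp (β * (u - t)) := by
    rw [div_lt_iff₀ ht] at h3; linarith [mul_comm t (Real.exp (β * (u - t)))]
  have h5 := mul_lt_mul_of_pos_right h4 (Real.exp_pos (-u * β))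
  calc u * Real.exp (-u * β) < t * Real.exp (β * (u - t)) * Real.exp (-u * β) := h5
  _ = t * Real.exp (-t * β) := by
      rw [mul_assoc, ← Real.exp_add]
      congr 1
      ring

lemma diff_strictAnti {a s β β' : ℝ} (ha : 1 < a) (has : a < s)
    (hβ : 1 ≤ β * Real.log a) (hlt : β < β') :
    a ^ (-β') - s ^ (-β') < a ^ (-β) - s ^ (-β) := by
  have ha0 : 0 < a := by linarith
  have hs0 : 0 < s := by linarith
  set F : ℝ → ℝ := fun x => Real.exp (-(Real.log a) * x) - Real.exp (-(Real.log s) * x) with hF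
  have hrw : ∀ x : ℝ, a ^ (-x) - s ^ (-x) = F x := by
    intro x
    rw [Real.rpow_def_of_pos ha0, Real.rpow_def_of_pos hs0, hF]
    ring_nf
  rw [hrw, hrw]
  have hanti : StrictAntiOn F (Set.Icc β β') := by
    apply strictAntiOn_of_deriv_neg (convex_Icc _ _)
    · fun_prop
    · intro x hx
      rw [interior_Icc] at hx
      have hd1 : HasDerivAt (fun x : ℝ => Real.exp (-(Real.log a) * x))
          (Real.exp (-(Real.log a) * x) * (-(Real.log a) * 1)) x :=
        (((hasDerivAt_id x).const_mul (-(Real.log a)))).exp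
      have hd2 : HasDerivAt (fun x : ℝ => Real.exp (-(Real.log s) * x))
          (Real.exp (-(Real.log s) * x) * (-(Real.log s) * 1)) x :=
        (((hasDerivAt_id x).const_mul (-(Real.log s)))).exp
      have hd := hd1.sub hd2
      rw [show deriv F x = _ from hd.deriv]
      have hlog : 0 < Real.log a := Real.log_pos ha
      have hkey : Real.log s * Real.exp (-(Real.log s) * x) <
          Real.log a * Real.exp (-(Real.log a) * x) := by
        apply key_ineq ha has
        nlinarith [hx.1]
      nlinarith
  exact hanti (Set.left_mem_Icc.mpr hlt.le) (Set.right_mem_Icc.mpr hlt.le) hlt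

noncomputable def readiness (γ bi bo βi βo ni no : ℝ) : ℝ :=
  2 * bi * (ni ^ (-βi) - (ni + no) ^ (-βi)) -
    γ * bo * (no ^ (-βo) - (ni + no) ^ (-βo))

/-- **Monotonicity of readiness to collaborate (asymmetric costs).** For `γ ∈ (0,1)`,
`b_i, b_{-i} > 0`, `β_i, β_{-i} ∈ (0,1]`, and data sizes `n_i, n_{-i} > 1`:
(1) `f_i` is strictly decreasing in `γ`;
(2) if `β_j ln n_j > 1` for `j = 1, 2`, then `f_i` is strictly decreasing in `β_i` and
strictly increasing in `β_{-i}`;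
(3) `f_i` is strictly increasing in `b_i` and strictly decreasing in `b_{-i}`. -/
theorem readiness_monotonicity
    (γ bi bo βi βo ni no : ℝ)
    (hγ₁ : 0 < γ) (hγ₂ : γ < 1) (hbi : 0 < bi) (hbo : 0 < bo)
    (hβi : βi ∈ Set.Ioc (0 : ℝ) 1) (hβo : βo ∈ Set.Ioc (0 : ℝ) 1)
    (hni : 1 < ni) (hno : 1 < no) :
    (∀ γ' : ℝ, 0 < γ' → γ < γ' → γ' < 1 →
      readiness γ' bi bo βi βo ni no < readiness γ bi bo βi βo ni no) ∧
    (1 < βi * Real.log ni → 1 < βo * Real.log no →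
      (∀ β' : ℝ, β' ∈ Set.Ioc (0 : ℝ) 1 → βi < β' →
        readiness γ bi bo β' βo ni no < readiness γ bi bo βi βo ni no) ∧
      (∀ β' : ℝ, β' ∈ Set.Ioc (0 : ℝ) 1 → βo < β' →
        readiness γ bi bo βi βo ni no < readiness γ bi bo βi β' ni no)) ∧
    (∀ b' : ℝ, bi < b' →
      readiness γ bi bo βi βo ni no < readiness γ b' bo βi βo ni no) ∧
    (∀ b' : ℝ, bo < b' →
      readiness γ bi b' βi βo ni no < readiness γ bi bo βi βo ni no) := by
  have hni0 : (0 : ℝ) < ni := by linarith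
  have hno0 : (0 : ℝ) < no := by linarith
  have hA : 0 < ni ^ (-βi) - (ni + no) ^ (-βi) := by
    have := Real.rpow_lt_rpow_of_neg hni0 (by linarith : ni < ni + no) (neg_neg_iff_pos.mpr hβi.1)
    linarith
  have hB : 0 < no ^ (-βo) - (ni + no) ^ (-βo) := by
    have := Real.rpow_lt_rpow_of_neg hno0 (by linarith : no < ni + no) (neg_neg_iff_pos.mpr hβo.1)
    linarith
  refine ⟨?_, ?_, ?_, ?_⟩
  · intro γ' _ hlt _
    unfold readiness
    nlinarith [mul_pos (mul_pos (sub_pos.mpr hlt) hbo) hB]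
  · intro h1 h2
    constructor
    · intro β' _ hlt
      unfold readiness
      have := diff_strictAnti hni (by linarith : ni < ni + no) h1.le hlt
      nlinarith
    · intro β' _ hlt
      unfold readiness
      have := diff_strictAnti hno (by linarith : no < ni + no) h2.le hlt
      nlinarith [mul_pos (mul_pos hγ₁ hbo) (sub_pos.mpr this)]
  · intro b' hlt
    unfold readiness
    nlinarith [mul_pos (sub_pos.mpr hlt) hA]
  · intro b' hlt
    unfold readiness
    nlinarith [mul_pos (mul_pos hγ₁ (sub_pos.mpr hlt)) hB]
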